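/- lim_{x→+∞} Si(x) = π/2, where Si(x) = ∫₀^x sin t / t dt. -/

import Mathlib

open MeasureTheory Real Filter

namespace SiAux
open intervalIntegral Complex
open scoped FourierTransform


lemma sinc_integrable (a b : ℝ) : IntervalIntegrable (fun t => Real.sin t / t) volume a b := by
  apply IntervalIntegrable.mono_fun' (g := fun _ => (1:ℝ)) (intervalIntegrable_const)
  · exact (Real.measurable_sin.div measurable_id).aestronglyMeasurable
  · filter_upwards with t
    rw [Real.norm_eq_abs, abs_div]
    rcases eq_or_ne t 0 with h | h
    · simp [h]
    · rw [div_le_one (abs_pos.mpr h)]; exact Real.abs_sin_le_abs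

lemma tail_bound {a b : ℝ} (ha : 0 < a) (hab : a ≤ b) :
    |∫ t in a..b, Real.sin t / t| ≤ 2 / a := by
  have hsub : ∀ t ∈ Set.uIcc a b, (0:ℝ) < t := by
    intro t ht
    rw [Set.uIcc_of_le hab] at ht
    linarith [ht.1]
  have hderiv : ∀ t ∈ Set.uIcc a b,
      HasDerivAt (fun u => -Real.cos u / u) (Real.sin t / t + Real.cos t / t^2) t := by
    intro t ht
    have htne : t ≠ 0 := (hsub t ht).ne'
    have h1 : HasDerivAt (fun u => -Real.cos u) (Real.sin t) t := (Real.hasDerivAt_cos t).neg.congr_deriv (by ring)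
    have := h1.div (hasDerivAt_id t) htne
    convert this using 1
    · rfl
    · rfl
    · rfl
    · simp only [id]
      field_simp
      ring
  have hint1 : IntervalIntegrable (fun t => Real.sin t / t + Real.cos t / t^2) volume a b := by
    apply ContinuousOn.intervalIntegrable
    intro t ht
    have htne : t ≠ 0 := (hsub t ht).ne'
    exact ((Real.continuous_sin.continuousAt.continuousWithinAt.div continuousWithinAt_id htne).add
      (Real.continuous_cos.continuousAt.continuousWithinAt.div (continuousWithinAt_id.pow 2) (pow_ne_zero 2 htne)))
  have key := integral_eq_sub_of_hasDerivAt hderiv hint1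
  have hint2 : IntervalIntegrable (fun t => Real.cos t / t^2) volume a b := by
    apply ContinuousOn.intervalIntegrable
    intro t ht
    have htne : t ≠ 0 := (hsub t ht).ne'
    exact Real.continuous_cos.continuousAt.continuousWithinAt.div (continuousWithinAt_id.pow 2) (pow_ne_zero 2 htne)
  have hint3 : IntervalIntegrable (fun t => Real.sin t / t) volume a b := by
    apply ContinuousOn.intervalIntegrable
    intro t ht
    exact Real.continuous_sin.continuousAt.continuousWithinAt.div continuousWithinAt_id (hsub t ht).ne'
  have split : (∫ t in a..b, Real.sin t / t) =
      (-Real.cos b / b - -Real.cos a / a) - ∫ t in a..b, Real.cos t / t^2 := by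
    rw [← key, integral_add hint3 hint2]; ring
  rw [split]
  have hb : 0 < b := lt_of_lt_of_le ha hab
  have e1 : |-Real.cos b / b| ≤ 1 / b := by
    rw [abs_div, abs_of_pos hb, abs_neg]
    gcongr
    exact Real.abs_cos_le_one b
  have e2 : |-Real.cos a / a| ≤ 1 / a := by
    rw [abs_div, abs_of_pos ha, abs_neg]
    gcongr
    exact Real.abs_cos_le_one a
  have e3 : |∫ t in a..b, Real.cos t / t^2| ≤ 1 / a - 1 / b := by
    have hle : ∀ t ∈ Set.uIcc a b, Real.cos t / t^2 ≤ t^(-2:ℤ) := by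
      intro t ht
      have htpos := hsub t ht
      have h1 : Real.cos t / t^2 ≤ 1 / t^2 :=
        div_le_div_of_nonneg_right (Real.cos_le_one t) (by positivity)
      calc Real.cos t / t^2 ≤ 1/t^2 := h1
        _ = t^(-2:ℤ) := by rw [zpow_neg, one_div]; norm_cast
    have hge : ∀ t ∈ Set.uIcc a b, -(t^(-2:ℤ)) ≤ Real.cos t / t^2 := by
      intro t ht
      have htpos := hsub t ht
      have h1 : -(1 / t^2) ≤ Real.cos t / t^2 := by
        rw [neg_div']
        exact div_le_div_of_nonneg_right (Real.neg_one_le_cos t) (by positivity)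
      calc -(t^(-2:ℤ)) = -(1/t^2) := by rw [zpow_neg, one_div]; norm_cast
        _ ≤ _ := h1
    have hzint : (∫ t in a..b, t^(-2:ℤ)) = 1/a - 1/b := by
      have hmem : (0:ℝ) ∉ Set.uIcc a b := by
        rw [Set.uIcc_of_le hab]
        intro h
        linarith [h.1]
      rw [integral_zpow (Or.inr ⟨by norm_num, hmem⟩)]
      norm_num [zpow_neg]
      ring
    have hzi : IntervalIntegrable (fun t : ℝ => t^(-2:ℤ)) volume a b := by
      apply ContinuousOn.intervalIntegrable
      intro t ht
      exact (continuousAt_zpow₀ t (-2) (Or.inl (hsub t ht).ne')).continuousWithinAt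
    have hup : (∫ t in a..b, Real.cos t / t^2) ≤ 1/a - 1/b := by
      rw [← hzint]
      exact integral_mono_on hab hint2 hzi (fun t ht => hle t (by
        rw [Set.uIcc_of_le hab]; exact ht))
    have hlo : -(1/a - 1/b) ≤ ∫ t in a..b, Real.cos t / t^2 := by
      rw [← hzint, ← intervalIntegral.integral_neg]
      exact integral_mono_on hab hzi.neg hint2 (fun t ht => hge t (by
        rw [Set.uIcc_of_le hab]; exact ht))
    rw [abs_le]
    exact ⟨hlo, hup⟩
  have h4 : |(-Real.cos b / b - -Real.cos a / a) - ∫ t in a..b, Real.cos t / t^2| ≤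
      (|-Real.cos b / b| + |-Real.cos a / a|) + |∫ t in a..b, Real.cos t / t^2| :=
    (abs_sub _ _).trans (add_le_add (abs_sub _ _) le_rfl)
  have hbb : 1 / b ≤ 1 / a := by gcongr
  have h2a : 2 / a = 1 / a + 1 / a := by ring
  linarith

noncomputable def DK (n : ℕ) (t : ℝ) : ℝ :=
  1 + 2 * ∑ k ∈ Finset.range n, Real.cos (2*(k+1)*t)

lemma DK_cont (n : ℕ) : Continuous (DK n) := by
  unfold DK
  continuity

lemma sin_mul_DK (n : ℕ) (t : ℝ) : Real.sin ((2*n+1)*t) = Real.sin t * DK n t := by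
  induction n with
  | zero => simp [DK]
  | succ n ih =>
    have key : Real.sin ((2*(n+1)+1)*t) - Real.sin ((2*n+1)*t)
        = 2 * Real.cos (2*(n+1)*t) * Real.sin t := by
      have e1 : (2*((n:ℝ)+1)+1)*t = 2*((n:ℝ)+1)*t + t := by ring
      have e2 : (2*(n:ℝ)+1)*t = 2*((n:ℝ)+1)*t - t := by ring
      push_cast
      rw [e1, e2, Real.sin_add, Real.sin_sub]
      ring
    have : Real.sin ((2*((n:ℝ)+1)+1)*t) = Real.sin ((2*n+1)*t) + 2 * Real.cos (2*((n:ℝ)+1)*t) * Real.sin t := by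
      push_cast at key ⊢; linarith
    push_cast
    rw [this, ih, DK, DK, Finset.sum_range_succ]
    push_cast
    ring

lemma DK_integral (n : ℕ) : ∫ t in (0:ℝ)..(π/2), DK n t = π/2 := by
  unfold DK
  rw [integral_add intervalIntegrable_const (by apply Continuous.intervalIntegrable; continuity)]
  rw [intervalIntegral.integral_const]
  rw [intervalIntegral.integral_const_mul]
  rw [intervalIntegral.integral_finset_sum (fun k _ => by
    apply Continuous.intervalIntegrable; continuity)]
  have hz : ∀ k ∈ Finset.range n, (∫ t in (0:ℝ)..(π/2), Real.cos (2*(k+1)*t)) = 0 := by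
    intro k _
    have hc : (2*((k:ℝ)+1)) ≠ 0 := by positivity
    rw [intervalIntegral.integral_comp_mul_left _ hc]
    rw [integral_cos]
    rw [mul_comm (2*((k:ℝ)+1)) (π/2)]
    rw [show π/2 * (2*((k:ℝ)+1)) = ((k:ℝ)+1)*π by ring]
    rw [mul_zero, Real.sin_zero]
    rw [show ((k:ℝ)+1)*π = ((k+1:ℕ):ℝ)*π by push_cast; ring]
    rw [Real.sin_nat_mul_pi]
    simp
  rw [Finset.sum_congr rfl hz]
  simp

lemma RL {g : ℝ → ℝ} (hg : Integrable g) :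
    Tendsto (fun c : ℝ => ∫ t, Real.sin (c * t) * g t) atTop (nhds 0) := by
  set f : ℝ → ℂ := fun t => (g t : ℂ) with hf
  have hfi : Integrable f := hg.ofReal
  have h0 := Real.zero_at_infty_fourier f
  have h1 : Tendsto (fun c : ℝ => 𝓕 f (c / (2 * π))) atTop (nhds 0) := by
    apply h0.comp
    apply Tendsto.mono_right _ _root_.atTop_le_cocompact
    exact Tendsto.atTop_div_const (by positivity) tendsto_id
  have h2 : Tendsto (fun c : ℝ => (𝓕 f (c / (2 * π))).im) atTop (nhds 0) := by
    simpa [Function.comp_def] using (Complex.continuous_im.tendsto 0).comp h1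
  have key : ∀ c : ℝ, (𝓕 f (c / (2 * π))).im = -∫ t, Real.sin (c * t) * g t := by
    intro c
    rw [Real.fourier_real_eq_integral_exp_smul]
    have hint : Integrable (fun v : ℝ => Complex.exp (↑(-2 * π * v * (c / (2*π))) * Complex.I) • f v) := by
      simp only [smul_eq_mul]
      apply Integrable.bdd_mul hfi
      · apply Continuous.aestronglyMeasurable
        exact Complex.continuous_exp.comp (by continuity)
      · exact Filter.Eventually.of_forall (fun v => (Complex.norm_exp_ofReal_mul_I _).le)
    rw [RCLike.im_eq_complex_im.symm, ← _root_.integral_im hint, ← MeasureTheory.integral_neg]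
    congr 1
    ext v
    have harg : -2 * π * v * (c / (2*π)) = -(c * v) := by
      field_simp
    rw [harg]
    rw [RCLike.im_eq_complex_im]
    simp only [smul_eq_mul, Complex.mul_im, Complex.exp_ofReal_mul_I_re,
      Complex.exp_ofReal_mul_I_im, Complex.ofReal_re, Complex.ofReal_im, Real.sin_neg, hf]
    ring
  have : (fun c : ℝ => ∫ t, Real.sin (c * t) * g t) = fun c => -(𝓕 f (c / (2 * π))).im := by
    ext c; rw [key c]; ring
  rw [this]
  simpa using h2.neg

/-- the singular part -/
noncomputable def g0 : ℝ → ℝ := fun t => 1/t - 1/Real.sin t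

lemma g0_bound {t : ℝ} (ht : t ∈ Set.Icc (0:ℝ) (π/2)) : |g0 t| ≤ π/2 := by
  obtain ⟨ht0, ht2⟩ := ht
  rcases eq_or_lt_of_le ht0 with rfl | htpos
  · simp [g0]; positivity
  have hsl : 2/π * t ≤ Real.sin t := Real.mul_le_sin htpos.le ht2
  have hstpos : 0 < Real.sin t := lt_of_lt_of_le (by positivity) hsl
  have hlt : Real.sin t < t := Real.sin_lt htpos
  have hcube : t - Real.sin t ≤ t^2 := by
    rcases le_or_gt t 1 with h1 | h1
    · have := Real.sin_gt_sub_cube htpos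
      nlinarith
    · nlinarith
  have hd : 1/t ≤ 1/Real.sin t := one_div_le_one_div_of_le hstpos hlt.le
  have habs : |g0 t| = 1/Real.sin t - 1/t := by
    rw [g0, abs_of_nonpos (sub_nonpos.mpr hd)]; ring
  rw [habs]
  have h1 : 1/Real.sin t - 1/t = (t - Real.sin t)/(t * Real.sin t) := by
    field_simp
  rw [h1]
  have h2 : (t - Real.sin t)/(t * Real.sin t) ≤ t^2/(t * Real.sin t) := by
    gcongr
  have h3 : t^2/(t * Real.sin t) = t/Real.sin t := by
    rw [sq]; field_simp
  have h4 : t/Real.sin t ≤ π/2 := by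
    have e : 2/π * t = 2*t/π := by ring
    rw [e, div_le_iff₀ Real.pi_pos] at hsl
    rw [div_le_iff₀ hstpos]
    linarith
  linarith [h3 ▸ h2]

noncomputable def g : ℝ → ℝ := (Set.Ioc (0:ℝ) (π/2)).indicator g0

lemma g0_meas : Measurable g0 := by
  unfold g0
  exact (measurable_const.div measurable_id).sub (measurable_const.div Real.measurable_sin)

lemma g_integrable : Integrable g := by
  rw [g, integrable_indicator_iff measurableSet_Ioc]
  apply Measure.integrableOn_of_bounded (M := π/2)
  · rw [Real.volume_Ioc]; exact ENNReal.ofReal_ne_top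
  · exact g0_meas.aestronglyMeasurable
  · filter_upwards [ae_restrict_mem measurableSet_Ioc] with t ht
    exact g0_bound ⟨ht.1.le, ht.2⟩

lemma step_sub (n : ℕ) :
    ∫ t in (0:ℝ)..((2*(n:ℝ)+1)*(π/2)), Real.sin t / t
      = ∫ t in (0:ℝ)..(π/2), Real.sin ((2*(n:ℝ)+1)*t) / t := by
  set c : ℝ := 2*(n:ℝ)+1 with hc
  have hcpos : 0 < c := by positivity
  have e : ∀ t : ℝ, c * (Real.sin (c*t) / (c*t)) = Real.sin (c*t) / t := by
    intro t
    rcases eq_or_ne t 0 with rfl | h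
    · simp
    · field_simp
  have hsub : (∫ t in (0:ℝ)..(π/2), Real.sin (c*t)/(c*t))
      = c⁻¹ * ∫ t in (0:ℝ)..(c*(π/2)), Real.sin t / t := by
    have h := intervalIntegral.integral_comp_mul_left (fun u => Real.sin u / u) hcpos.ne'
      (a := (0:ℝ)) (b := π/2)
    simpa using h
  calc ∫ t in (0:ℝ)..(c*(π/2)), Real.sin t / t
      = c * (c⁻¹ * ∫ t in (0:ℝ)..(c*(π/2)), Real.sin t / t) := by
        rw [← mul_assoc, mul_inv_cancel₀ hcpos.ne', one_mul]
    _ = c * ∫ t in (0:ℝ)..(π/2), Real.sin (c*t)/(c*t) := by rw [hsub]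
    _ = ∫ t in (0:ℝ)..(π/2), c * (Real.sin (c*t)/(c*t)) :=
        (intervalIntegral.integral_const_mul _ _).symm
    _ = ∫ t in (0:ℝ)..(π/2), Real.sin (c*t) / t := by
        apply intervalIntegral.integral_congr
        intro t _
        exact e t

lemma sg0_intble (n : ℕ) : IntervalIntegrable
    (fun t => Real.sin ((2*(n:ℝ)+1)*t) * g0 t) volume 0 (π/2) := by
  apply IntervalIntegrable.mono_fun' (g := fun _ => (π/2:ℝ)) intervalIntegrable_const
  · exact ((Real.measurable_sin.comp (measurable_const.mul measurable_id)).mul g0_meas).aestronglyMeasurable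
  · filter_upwards [ae_restrict_mem measurableSet_uIoc] with t ht
    rw [Set.uIoc_of_le (by positivity : (0:ℝ) ≤ π/2)] at ht
    rw [Real.norm_eq_abs, abs_mul]
    calc |Real.sin ((2*(n:ℝ)+1)*t)| * |g0 t| ≤ 1 * (π/2) := by
          apply mul_le_mul (Real.abs_sin_le_one _) (g0_bound ⟨ht.1.le, ht.2⟩) (abs_nonneg _) one_pos.le
      _ = π/2 := one_mul _

lemma step_split (n : ℕ) :
    ∫ t in (0:ℝ)..(π/2), Real.sin ((2*(n:ℝ)+1)*t) / t
      = π/2 + ∫ t, Real.sin ((2*(n:ℝ)+1)*t) * g t := by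
  have hpi : (0:ℝ) ≤ π/2 := by positivity
  have hcongr : ∫ t in (0:ℝ)..(π/2), Real.sin ((2*(n:ℝ)+1)*t) / t
      = ∫ t in (0:ℝ)..(π/2), (DK n t + Real.sin ((2*(n:ℝ)+1)*t) * g0 t) := by
    apply intervalIntegral.integral_congr_ae
    apply Filter.Eventually.of_forall
    intro t ht
    rw [Set.uIoc_of_le hpi] at ht
    have ht0 : 0 < t := ht.1
    have hst : 0 < Real.sin t := Real.sin_pos_of_pos_of_lt_pi ht0
      (lt_of_le_of_lt ht.2 (by linarith [Real.pi_pos]))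
    have hDK := sin_mul_DK n t
    rw [g0, hDK]
    field_simp
    ring
  rw [hcongr, intervalIntegral.integral_add ((DK_cont n).intervalIntegrable _ _) (sg0_intble n),
    DK_integral n]
  congr 1
  have hind : (fun t => Real.sin ((2*(n:ℝ)+1)*t) * g t)
      = (Set.Ioc (0:ℝ) (π/2)).indicator (fun t => Real.sin ((2*(n:ℝ)+1)*t) * g0 t) := by
    ext t
    rw [g]
    by_cases h : t ∈ Set.Ioc (0:ℝ) (π/2)
    · rw [Set.indicator_of_mem h, Set.indicator_of_mem h]
    · rw [Set.indicator_of_notMem h, Set.indicator_of_notMem h, mul_zero]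
  rw [hind, MeasureTheory.integral_indicator measurableSet_Ioc,
    intervalIntegral.integral_of_le hpi]

lemma tendsto_seq : Tendsto (fun n : ℕ => ∫ t in (0:ℝ)..((2*(n:ℝ)+1)*(π/2)), Real.sin t / t)
    atTop (nhds (π/2)) := by
  have heq : (fun n : ℕ => ∫ t in (0:ℝ)..((2*(n:ℝ)+1)*(π/2)), Real.sin t / t)
      = fun n : ℕ => π/2 + ∫ t, Real.sin ((2*(n:ℝ)+1)*t) * g t := by
    ext n
    rw [step_sub n, step_split n]
  rw [heq]
  have h1 : Tendsto (fun n : ℕ => (2*(n:ℝ)+1)) atTop atTop := by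
    apply Filter.tendsto_atTop_add_const_right
    exact Tendsto.const_mul_atTop two_pos tendsto_natCast_atTop_atTop
  have h2 := (RL g_integrable).comp h1
  have := h2.const_add (π/2)
  simpa using this

end SiAux

theorem Si_tendsto_pi_div_two :
    Tendsto (fun x : ℝ => ∫ t in (0:ℝ)..x, Real.sin t / t) atTop (nhds (π / 2)) := by
  rw [Metric.tendsto_atTop]
  intro ε hε
  have h1 := SiAux.tendsto_seq
  rw [Metric.tendsto_atTop] at h1
  obtain ⟨N1, hN1⟩ := h1 (ε/2) (half_pos hε)
  have hxn : Tendsto (fun n : ℕ => (2*(n:ℝ)+1)*(π/2)) atTop atTop := by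
    apply Tendsto.atTop_mul_const (by positivity : (0:ℝ) < π/2)
    apply Filter.tendsto_atTop_add_const_right
    exact Tendsto.const_mul_atTop two_pos tendsto_natCast_atTop_atTop
  obtain ⟨N2, hN2⟩ := Filter.eventually_atTop.mp (hxn.eventually_ge_atTop (4/ε))
  set n := max N1 N2 with hn
  set X : ℝ := (2*(n:ℝ)+1)*(π/2) with hX
  have hX4 : 4/ε ≤ X := hN2 n (le_max_right _ _)
  have hXpos : 0 < X := lt_of_lt_of_le (by positivity) hX4
  have hdn : |(∫ t in (0:ℝ)..X, Real.sin t / t) - π/2| < ε/2 := by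
    have := hN1 n (le_max_left _ _)
    rwa [Real.dist_eq] at this
  refine ⟨X, fun x hx => ?_⟩
  rw [Real.dist_eq]
  have hadd : (∫ t in (0:ℝ)..x, Real.sin t / t)
      = (∫ t in (0:ℝ)..X, Real.sin t / t) + ∫ t in X..x, Real.sin t / t :=
    (intervalIntegral.integral_add_adjacent_intervals (SiAux.sinc_integrable 0 X)
      (SiAux.sinc_integrable X x)).symm
  have htail : |∫ t in X..x, Real.sin t / t| ≤ 2/X := SiAux.tail_bound hXpos hx
  have h2X : 2/X ≤ ε/2 := by
    calc 2/X ≤ 2/(4/ε) := by gcongr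
      _ = ε/2 := by
          rw [div_div_eq_mul_div]
          ring
  calc |(∫ t in (0:ℝ)..x, Real.sin t / t) - π/2|
      = |((∫ t in (0:ℝ)..X, Real.sin t / t) - π/2) + ∫ t in X..x, Real.sin t / t| := by
        rw [hadd]
        congr 1
        ring
    _ ≤ |(∫ t in (0:ℝ)..X, Real.sin t / t) - π/2| + |∫ t in X..x, Real.sin t / t| :=
        abs_add_le _ _
    _ < ε/2 + ε/2 := by
        apply add_lt_add_of_lt_of_le hdn (htail.trans h2X)
    _ = ε := by ring
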